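/- For every m ≥ 0, the lattice generated by the rows of G(m, m) equals the lattice generated by the rows of the Sylvester Hadamard matrix 𝓗ₘ; that is, Λ(m, m) = Λ(𝓗ₘ). -/

import Mathlib

/-- `Hmat m` : the `2^m × 2^m` matrix defined by `H₀ = [1]` and
`H_{m+1} = [[Hₘ, Hₘ], [0, Hₘ]]` in block form. -/
def Hmat : (m : ℕ) → Matrix (Fin (2 ^ m)) (Fin (2 ^ m)) ℤ
  | 0 => Matrix.of fun _ _ => 1
  | m + 1 =>
      Matrix.reindex
        (finSumFinEquiv.trans (finCongr (by rw [pow_succ, mul_two] :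
          2 ^ m + 2 ^ m = 2 ^ (m + 1))))
        (finSumFinEquiv.trans (finCongr (by rw [pow_succ, mul_two] :
          2 ^ m + 2 ^ m = 2 ^ (m + 1))))
        (Matrix.fromBlocks (Hmat m) (Hmat m) 0 (Hmat m))

/-- `Smat m` : the `2^m × 2^m` Sylvester Hadamard matrix, `𝓗₀ = [1]`,
`𝓗_{m+1} = [[𝓗ₘ, 𝓗ₘ], [𝓗ₘ, −𝓗ₘ]]`. -/
def Smat : (m : ℕ) → Matrix (Fin (2 ^ m)) (Fin (2 ^ m)) ℤ
  | 0 => Matrix.of fun _ _ => 1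
  | m + 1 =>
      Matrix.reindex
        (finSumFinEquiv.trans (finCongr (by rw [pow_succ, mul_two] :
          2 ^ m + 2 ^ m = 2 ^ (m + 1))))
        (finSumFinEquiv.trans (finCongr (by rw [pow_succ, mul_two] :
          2 ^ m + 2 ^ m = 2 ^ (m + 1))))
        (Matrix.fromBlocks (Smat m) (Smat m) (Smat m) (-(Smat m)))

/-- Hamming weight of the `s`-th row of `Hmat m`. -/
def rowWeight (m : ℕ) (s : Fin (2 ^ m)) : ℕ :=
  (Finset.univ.filter (fun t => Hmat m s t ≠ 0)).card

/-- `Gmat m j` : the matrix whose `s`-th row is the `s`-th row of `Hmat m`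
multiplied by `2^(j − ℓ)` (truncated subtraction) where `2^ℓ` is the Hamming
weight of that row. -/
def Gmat (m j : ℕ) : Matrix (Fin (2 ^ m)) (Fin (2 ^ m)) ℤ :=
  Matrix.of fun s t => (2 : ℤ) ^ (j - Nat.log 2 (rowWeight m s)) * Hmat m s t

/-- The lattice generated by the rows of `G`. -/
def latticeOf {n : ℕ} (G : Matrix (Fin n) (Fin n) ℤ) : Set (Fin n → ℤ) :=
  { x | ∃ u : Fin n → ℤ, x = Matrix.vecMul u G }

def eqv (m : ℕ) : (Fin (2 ^ m) ⊕ Fin (2 ^ m)) ≃ Fin (2 ^ (m + 1)) :=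
  finSumFinEquiv.trans (finCongr (by rw [pow_succ, mul_two]))

lemma hmat_succ (m : ℕ) : Hmat (m + 1) =
    Matrix.reindex (eqv m) (eqv m) (Matrix.fromBlocks (Hmat m) (Hmat m) 0 (Hmat m)) := rfl

lemma smat_succ (m : ℕ) : Smat (m + 1) =
    Matrix.reindex (eqv m) (eqv m)
      (Matrix.fromBlocks (Smat m) (Smat m) (Smat m) (-(Smat m))) := rfl

lemma hmat_succ_apply (m : ℕ) (i j : Fin (2 ^ m) ⊕ Fin (2 ^ m)) :
    Hmat (m + 1) (eqv m i) (eqv m j) =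
      Matrix.fromBlocks (Hmat m) (Hmat m) 0 (Hmat m) i j := by
  rw [hmat_succ]; simp

lemma rowWeight_eq_sum (m : ℕ) (s : Fin (2 ^ m)) :
    rowWeight m s = ∑ t, if Hmat m s t ≠ 0 then 1 else 0 := by
  rw [rowWeight, Finset.card_filter]

lemma rowWeight_succ_inl (m : ℕ) (s : Fin (2 ^ m)) :
    rowWeight (m + 1) (eqv m (Sum.inl s)) = 2 * rowWeight m s := by
  rw [rowWeight_eq_sum,
    ← Equiv.sum_comp (eqv m)
      (fun t => if Hmat (m + 1) (eqv m (Sum.inl s)) t ≠ 0 then 1 else 0)]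
  simp only [hmat_succ_apply]
  rw [Fintype.sum_sum_type]
  simp [rowWeight_eq_sum, two_mul]
  congr 1 <;> exact Finset.sum_congr rfl fun x _ => by split_ifs <;> simp_all

lemma rowWeight_succ_inr (m : ℕ) (s : Fin (2 ^ m)) :
    rowWeight (m + 1) (eqv m (Sum.inr s)) = rowWeight m s := by
  rw [rowWeight_eq_sum,
    ← Equiv.sum_comp (eqv m)
      (fun t => if Hmat (m + 1) (eqv m (Sum.inr s)) t ≠ 0 then 1 else 0)]
  simp only [hmat_succ_apply]
  rw [Fintype.sum_sum_type]
  simp [rowWeight_eq_sum]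
  exact Finset.sum_congr rfl fun x _ => by split_ifs <;> simp_all

lemma rowWeight_pos (m : ℕ) : ∀ s : Fin (2 ^ m), 0 < rowWeight m s := by
  induction m with
  | zero =>
    intro s; simp [rowWeight, Hmat]
  | succ m ih =>
    intro s
    obtain ⟨i, rfl⟩ := (eqv m).surjective s
    cases i with
    | inl s => rw [rowWeight_succ_inl]; exact Nat.mul_pos two_pos (ih s)
    | inr s => rw [rowWeight_succ_inr]; exact ih s

lemma rowWeight_le (m : ℕ) (s : Fin (2 ^ m)) : rowWeight m s ≤ 2 ^ m := by
  calc rowWeight m s ≤ Finset.univ.card := Finset.card_filter_le _ _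
  _ = 2 ^ m := by simp

lemma log_rowWeight_le (m : ℕ) (s : Fin (2 ^ m)) :
    Nat.log 2 (rowWeight m s) ≤ m := by
  calc Nat.log 2 (rowWeight m s) ≤ Nat.log 2 (2 ^ m) :=
        Nat.log_mono_right (rowWeight_le m s)
  _ = m := Nat.log_pow one_lt_two m

lemma gmat_succ (m : ℕ) : Gmat (m + 1) (m + 1) =
    Matrix.reindex (eqv m) (eqv m)
      (Matrix.fromBlocks (Gmat m m) (Gmat m m) 0 (2 • Gmat m m)) := by
  ext i j
  obtain ⟨i, rfl⟩ := (eqv m).surjective i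
  obtain ⟨j, rfl⟩ := (eqv m).surjective j
  have hent := hmat_succ_apply m i j
  cases i with
  | inl s =>
    have hw : rowWeight (m + 1) (eqv m (Sum.inl s)) = rowWeight m s * 2 := by
      rw [rowWeight_succ_inl]; ring
    have hlog : Nat.log 2 (rowWeight (m + 1) (eqv m (Sum.inl s)))
        = Nat.log 2 (rowWeight m s) + 1 := by
      rw [hw, Nat.log_mul_base one_lt_two (rowWeight_pos m s).ne']
    cases j with
    | inl t =>
      simp [Gmat, hent, hlog, Nat.succ_sub_succ]
    | inr t =>
      simp [Gmat, hent, hlog, Nat.succ_sub_succ]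
  | inr s =>
    have hlog : Nat.log 2 (rowWeight (m + 1) (eqv m (Sum.inr s)))
        = Nat.log 2 (rowWeight m s) := by rw [rowWeight_succ_inr]
    have hexp : m + 1 - Nat.log 2 (rowWeight m s)
        = (m - Nat.log 2 (rowWeight m s)) + 1 :=
      Nat.succ_sub (log_rowWeight_le m s)
    cases j with
    | inl t =>
      simp [Gmat, hent, hlog]
    | inr t =>
      simp [Gmat, hent, hlog, hexp, pow_succ]
      ring

lemma gmat_zero : Gmat 0 0 = Smat 0 := by
  ext i j
  simp [Gmat, Smat, Hmat, rowWeight]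

lemma key (m : ℕ) :
    ∃ P Q : Matrix (Fin (2 ^ m)) (Fin (2 ^ m)) ℤ,
      Gmat m m = P * Smat m ∧ Smat m = Q * Gmat m m := by
  induction m with
  | zero => exact ⟨1, 1, by rw [gmat_zero, one_mul], by rw [gmat_zero, one_mul]⟩
  | succ m ih =>
    obtain ⟨P, Q, hP, hQ⟩ := ih
    refine ⟨Matrix.reindex (eqv m) (eqv m) (Matrix.fromBlocks P 0 P (-P)),
            Matrix.reindex (eqv m) (eqv m) (Matrix.fromBlocks Q 0 Q (-Q)), ?_, ?_⟩
    · rw [gmat_succ, smat_succ]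
      simp only [Matrix.reindex_apply, Matrix.submatrix_mul_equiv,
        Matrix.fromBlocks_multiply]
      rw [hP]
      simp [Matrix.neg_mul, Matrix.mul_neg, Matrix.mul_add, Matrix.mul_smul, two_smul]
    · rw [gmat_succ, smat_succ]
      simp only [Matrix.reindex_apply, Matrix.submatrix_mul_equiv,
        Matrix.fromBlocks_multiply]
      rw [hQ]
      simp [Matrix.neg_mul, Matrix.mul_neg, Matrix.mul_add, Matrix.mul_smul, two_smul]

lemma latticeOf_subset_of_factor {n : ℕ} {A B M : Matrix (Fin n) (Fin n) ℤ}
    (h : A = M * B) : latticeOf A ⊆ latticeOf B := by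
  rintro x ⟨u, rfl⟩
  exact ⟨Matrix.vecMul u M, by rw [h, Matrix.vecMul_vecMul]⟩

/-- The lattice generated by the rows of `G(m, m)` equals the lattice generated by
the rows of the Sylvester Hadamard matrix `𝓗ₘ`. -/
theorem lattice_Gmm_eq_lattice_sylvester (m : ℕ) :
    latticeOf (Gmat m m) = latticeOf (Smat m) := by
  obtain ⟨P, Q, hP, hQ⟩ := key m
  exact Set.Subset.antisymm (latticeOf_subset_of_factor hP)
    (latticeOf_subset_of_factor hQ)
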